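/- (Ballot-type identity for the simple symmetric random walk) Let δ_1, …, δ_n be i.i.d. random variables taking values ±1 with probability 1/2 each, and let S_k = δ_1 + … + δ_k. Then P(S_k > 0 for all 1 ≤ k ≤ n) + P(S_k < 0 for all 1 ≤ k ≤ n) = E[|S_n|]/n. -/

import Mathlib

open MeasureTheory ProbabilityTheory Finset



/-!
# Ballot problem

This file proves Theorem 30 from the [100 Theorems List](https://www.cs.ru.nl/~freek/100/).

The ballot problem asks, if in an election, candidate A receives `p` votes whereas candidate B
receives `q` votes where `p > q`, what is the probability that candidate A is strictly ahead
throughout the count. The probability of this is `(p - q) / (p + q)`.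

## Main definitions

* `countedSequence`: given natural numbers `p` and `q`, `countedSequence p q` is the set of
  all lists containing `p` of `1`s and `q` of `-1`s representing the votes of candidate A and B
  respectively.
* `staysPositive`: is the set of lists of integers which suffix has positive sum. In particular,
  the intersection of this set with `countedSequence` is the set of lists where candidate A is
  strictly ahead.

## Main result

* `ballot_problem`: the ballot problem.

-/


open Set ProbabilityTheory MeasureTheory
open scoped ENNReal

namespace Ballot

/-- The set of nonempty lists of integers which suffix has positive sum. -/
def staysPositive : Set (List ℤ) :=
  {l | ∀ l₂, l₂ ≠ [] → l₂ <:+ l → 0 < l₂.sum}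

@[simp]
theorem staysPositive_nil : [] ∈ staysPositive :=
  fun _ hl hl₁ => (hl (List.eq_nil_of_suffix_nil hl₁)).elim

theorem staysPositive_suffix {l₁ l₂ : List ℤ} (hl₂ : l₂ ∈ staysPositive) (h : l₁ <:+ l₂) :
    l₁ ∈ staysPositive := fun l hne hl ↦ hl₂ l hne <| hl.trans h

theorem staysPositive_cons {x : ℤ} {l : List ℤ} :
    x::l ∈ staysPositive ↔ l ∈ staysPositive ∧ 0 < x + l.sum := by
  simp [staysPositive, List.suffix_cons_iff, or_imp, forall_and, @imp.swap _ (_ = _), and_comm]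

theorem sum_nonneg_of_staysPositive : ∀ {l : List ℤ}, l ∈ staysPositive → 0 ≤ l.sum
  | [], _ => le_rfl
  | (_::_), h => (h _ (List.cons_ne_nil _ _) List.suffix_rfl).le

theorem staysPositive_cons_pos (x : ℤ) (hx : 0 < x) (l : List ℤ) :
    (x::l) ∈ staysPositive ↔ l ∈ staysPositive := by
  rw [staysPositive_cons, and_iff_left_iff_imp]
  intro h
  have := sum_nonneg_of_staysPositive h
  positivity

/-- `countedSequence p q` is the set of lists of integers for which every element is `+1` or `-1`,
there are `p` lots of `+1` and `q` lots of `-1`.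

This represents vote sequences where candidate `+1` receives `p` votes and candidate `-1` receives
`q` votes.
-/
def countedSequence (p q : ℕ) : Set (List ℤ) :=
  {l | l.count 1 = p ∧ l.count (-1) = q ∧ ∀ x ∈ l, x = (1 : ℤ) ∨ x = -1}

open scoped List in
/-- An alternative definition of `countedSequence` that uses `List.Perm`. -/
theorem mem_countedSequence_iff_perm {p q l} :
    l ∈ countedSequence p q ↔ l ~ List.replicate p (1 : ℤ) ++ List.replicate q (-1) := by
  rw [List.perm_replicate_append_replicate]
  · simp only [countedSequence, List.subset_def, mem_setOf_eq, List.mem_cons (b := (1 : ℤ)),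
      List.mem_singleton]
  · norm_num1

@[simp]
theorem counted_right_zero (p : ℕ) : countedSequence p 0 = {List.replicate p 1} := by
  ext l; simp [mem_countedSequence_iff_perm]

@[simp]
theorem counted_left_zero (q : ℕ) : countedSequence 0 q = {List.replicate q (-1)} := by
  ext l; simp [mem_countedSequence_iff_perm]

theorem mem_of_mem_countedSequence {p q} {l} (hl : l ∈ countedSequence p q) {x : ℤ} (hx : x ∈ l) :
    x = 1 ∨ x = -1 :=
  hl.2.2 x hx

theorem length_of_mem_countedSequence {p q} {l : List ℤ} (hl : l ∈ countedSequence p q) :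
    l.length = p + q := by simp [(mem_countedSequence_iff_perm.1 hl).length_eq]

theorem counted_eq_nil_iff {p q : ℕ} {l : List ℤ} (hl : l ∈ countedSequence p q) :
    l = [] ↔ p = 0 ∧ q = 0 :=
  List.length_eq_zero_iff.symm.trans <| by simp [length_of_mem_countedSequence hl]

theorem counted_ne_nil_left {p q : ℕ} (hp : p ≠ 0) {l : List ℤ} (hl : l ∈ countedSequence p q) :
    l ≠ [] := by simp [counted_eq_nil_iff hl, hp]

theorem counted_ne_nil_right {p q : ℕ} (hq : q ≠ 0) {l : List ℤ} (hl : l ∈ countedSequence p q) :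
    l ≠ [] := by simp [counted_eq_nil_iff hl, hq]

theorem counted_succ_succ (p q : ℕ) :
    countedSequence (p + 1) (q + 1) =
      List.cons 1 '' countedSequence p (q + 1) ∪ List.cons (-1) '' countedSequence (p + 1) q := by
  ext l
  rw [countedSequence, countedSequence, countedSequence]
  constructor
  · intro hl
    have hlnil := counted_ne_nil_left (Nat.succ_ne_zero p) hl
    obtain ⟨hl₀, hl₁, hl₂⟩ := hl
    obtain hlast | hlast := hl₂ (l.head hlnil) (List.head_mem hlnil)
    · refine Or.inl ⟨l.tail, ⟨?_, ?_, ?_⟩, ?_⟩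
      · rw [List.count_tail, hl₀, List.head?_eq_head hlnil, hlast]; simp
      · rw [List.count_tail, hl₁, List.head?_eq_head hlnil, hlast]; simp
      · exact fun x hx => hl₂ x (List.mem_of_mem_tail hx)
      · rw [← hlast, List.cons_head_tail]
    · refine Or.inr ⟨l.tail, ⟨?_, ?_, ?_⟩, ?_⟩
      · rw [List.count_tail, hl₀, List.head?_eq_head hlnil, hlast]; simp
      · rw [List.count_tail, hl₁, List.head?_eq_head hlnil, hlast]; simp
      · exact fun x hx => hl₂ x (List.mem_of_mem_tail hx)
      · rw [← hlast, List.cons_head_tail]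
  · rintro (⟨t, ⟨ht₀, ht₁, ht₂⟩, rfl⟩ | ⟨t, ⟨ht₀, ht₁, ht₂⟩, rfl⟩)
    · refine ⟨?_, ?_, ?_⟩
      · rw [List.count_cons, beq_self_eq_true, if_pos rfl, ht₀]
      · rw [List.count_cons, if_neg, ht₁]
        norm_num
      · rintro x (_ | _)
        exacts [Or.inl rfl, ht₂ x (by tauto)]
    · refine ⟨?_, ?_, ?_⟩
      · rw [List.count_cons, if_neg, ht₀]
        norm_num
      · rw [List.count_cons, beq_self_eq_true, if_pos rfl, ht₁]
      · rintro x (_ | _)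
        exacts [Or.inr rfl, ht₂ x (by tauto)]

theorem countedSequence_finite : ∀ p q : ℕ, (countedSequence p q).Finite
  | 0, q => by simp
  | p + 1, 0 => by simp
  | p + 1, q + 1 => by
    rw [counted_succ_succ, Set.finite_union, Set.finite_image_iff List.cons_injective.injOn,
      Set.finite_image_iff List.cons_injective.injOn]
    exact ⟨countedSequence_finite _ _, countedSequence_finite _ _⟩

theorem countedSequence_nonempty : ∀ p q : ℕ, (countedSequence p q).Nonempty
  | 0, q => by simp
  | p + 1, 0 => by simp
  | p + 1, q + 1 => by
    rw [counted_succ_succ, union_nonempty, image_nonempty]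
    exact Or.inl (countedSequence_nonempty _ _)

theorem sum_of_mem_countedSequence {p q} {l : List ℤ} (hl : l ∈ countedSequence p q) :
    l.sum = p - q := by simp [(mem_countedSequence_iff_perm.1 hl).sum_eq, sub_eq_add_neg]

theorem disjoint_bits (p q : ℕ) :
    Disjoint (List.cons 1 '' countedSequence p (q + 1))
      (List.cons (-1) '' countedSequence (p + 1) q) := by
  simp_rw [Set.disjoint_left, Set.mem_image, not_exists, exists_imp]
  rintro _ _ ⟨_, rfl⟩ _ ⟨_, _, _⟩

open MeasureTheory.Measure

private def measureableSpace_list_int : MeasurableSpace (List ℤ) := ⊤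

attribute [local instance] measureableSpace_list_int

private theorem measurableSingletonClass_list_int : MeasurableSingletonClass (List ℤ) :=
  { measurableSet_singleton := fun _ => trivial }

attribute [local instance] measurableSingletonClass_list_int

private theorem list_int_measurableSet {s : Set (List ℤ)} : MeasurableSet s := trivial

theorem count_countedSequence : ∀ p q : ℕ, count (countedSequence p q) = (p + q).choose p
  | p, 0 => by simp [counted_right_zero, count_singleton]
  | 0, q => by simp [counted_left_zero, count_singleton]
  | p + 1, q + 1 => by
    rw [counted_succ_succ, measure_union (disjoint_bits _ _) list_int_measurableSet,
      count_injective_image List.cons_injective, count_countedSequence _ _,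
      count_injective_image List.cons_injective, count_countedSequence _ _]
    norm_cast
    rw [add_assoc, add_comm 1 q, ← Nat.choose_succ_succ, Nat.succ_eq_add_one, add_right_comm]

theorem first_vote_pos :
    ∀ p q,
      0 < p + q → uniformOn (countedSequence p q : Set (List ℤ)) {l | l.headI = 1} = p / (p + q)
  | p + 1, 0, _ => by
    rw [counted_right_zero, uniformOn_singleton]
    simp [ENNReal.div_self _ _, List.replicate_succ]
  | 0, q + 1, _ => by
    rw [counted_left_zero, uniformOn_singleton]
    simp only [List.replicate, Nat.add_eq, add_zero, mem_setOf_eq, List.headI_cons, Nat.cast_zero,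
      ENNReal.zero_div, ite_eq_right_iff]
    decide
  | p + 1, q + 1, _ => by
    simp_rw [counted_succ_succ]
    rw [← uniformOn_disjoint_union ((countedSequence_finite _ _).image _)
        ((countedSequence_finite _ _).image _) (disjoint_bits _ _),
      ← counted_succ_succ,
      uniformOn_eq_one_of ((countedSequence_finite p (q + 1)).image _)
        ((countedSequence_nonempty _ _).image _)]
    · have : List.cons (-1) '' countedSequence (p + 1) q ∩ {l : List ℤ | l.headI = 1} = ∅ := by
        ext
        simp only [mem_inter_iff, mem_image, mem_setOf_eq, mem_empty_iff_false, iff_false,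
          not_and, forall_exists_index, and_imp]
        rintro l _ rfl
        norm_num
      have hint :
        countedSequence (p + 1) (q + 1) ∩ List.cons 1 '' countedSequence p (q + 1) =
          List.cons 1 '' countedSequence p (q + 1) := by
        rw [inter_eq_right, counted_succ_succ]
        exact subset_union_left
      rw [(uniformOn_eq_zero_iff <| (countedSequence_finite _ _).image _).2 this, uniformOn,
        cond_apply list_int_measurableSet, hint, count_injective_image List.cons_injective,
        count_countedSequence, count_countedSequence, one_mul, zero_mul, add_zero,
        Nat.cast_add, Nat.cast_one, mul_comm, ← div_eq_mul_inv, ENNReal.div_eq_div_iff]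
      · norm_cast
        rw [mul_comm _ (p + 1), ← Nat.succ_eq_add_one p, Nat.succ_add, Nat.add_one_mul_choose_eq,
          mul_comm]
      all_goals simp [(Nat.choose_pos <| le_add_of_nonneg_right zero_le').ne']
    · simp

theorem headI_mem_of_nonempty {α : Type*} [Inhabited α] : ∀ {l : List α} (_ : l ≠ []), l.headI ∈ l
  | [], h => (h rfl).elim
  | x::l, _ => List.mem_cons_self

theorem first_vote_neg (p q : ℕ) (h : 0 < p + q) :
    uniformOn (countedSequence p q) {l | l.headI = 1}ᶜ = q / (p + q) := by
  have h' : (p + q : ℝ≥0∞) ≠ 0 := mod_cast h.ne'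
  have := uniformOn_compl
    {l : List ℤ | l.headI = 1}ᶜ (countedSequence_finite p q) (countedSequence_nonempty p q)
  rw [compl_compl, first_vote_pos _ _ h] at this
  rw [ENNReal.eq_sub_of_add_eq _ this, ENNReal.eq_div_iff, ENNReal.mul_sub, mul_one,
    ENNReal.mul_div_cancel', ENNReal.add_sub_cancel_left]
  all_goals simp_all [ENNReal.div_eq_top]

theorem ballot_same (p : ℕ) : uniformOn (countedSequence (p + 1) (p + 1)) staysPositive = 0 := by
  rw [uniformOn_eq_zero_iff (countedSequence_finite _ _), Set.eq_empty_iff_forall_notMem]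
  rintro x ⟨hx, t⟩
  apply ne_of_gt (t x _ x.suffix_refl)
  · simpa using sum_of_mem_countedSequence hx
  · refine List.ne_nil_of_length_pos ?_
    rw [length_of_mem_countedSequence hx]
    exact Nat.add_pos_left (Nat.succ_pos _) _

theorem ballot_edge (p : ℕ) : uniformOn (countedSequence (p + 1) 0) staysPositive = 1 := by
  rw [counted_right_zero]
  refine uniformOn_eq_one_of (finite_singleton _) (singleton_nonempty _) ?_
  refine singleton_subset_iff.2 fun l hl₁ hl₂ => List.sum_pos _ (fun x hx => ?_) hl₁
  rw [List.eq_of_mem_replicate (hl₂.mem hx)]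
  norm_num

theorem countedSequence_int_pos_counted_succ_succ (p q : ℕ) :
    countedSequence (p + 1) (q + 1) ∩ {l | l.headI = 1} =
      (countedSequence p (q + 1)).image (List.cons 1) := by
  rw [counted_succ_succ, union_inter_distrib_right,
      (_ : List.cons (-1) '' countedSequence (p + 1) q ∩ {l | l.headI = 1} = ∅), union_empty] <;>
    · ext
      simp only [mem_inter_iff, mem_image, mem_setOf_eq, and_iff_left_iff_imp, mem_empty_iff_false,
        iff_false, not_and, forall_exists_index, and_imp]
      rintro y _ rfl
      norm_num

theorem ballot_pos (p q : ℕ) :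
    uniformOn (countedSequence (p + 1) (q + 1) ∩ {l | l.headI = 1}) staysPositive =
      uniformOn (countedSequence p (q + 1)) staysPositive := by
  rw [countedSequence_int_pos_counted_succ_succ, uniformOn, uniformOn,
    cond_apply list_int_measurableSet, cond_apply list_int_measurableSet,
    count_injective_image List.cons_injective]
  congr 1
  have : (1 :: ·) '' countedSequence p (q + 1) ∩ staysPositive =
      (1 :: ·) '' (countedSequence p (q + 1) ∩ staysPositive) := by
    simp only [image_inter List.cons_injective, Set.ext_iff, mem_inter_iff, and_congr_right_iff,
      forall_mem_image, List.cons_injective.mem_set_image, staysPositive_cons_pos _ one_pos]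
    exact fun _ _ ↦ trivial
  rw [this, count_injective_image]
  exact List.cons_injective

theorem countedSequence_int_neg_counted_succ_succ (p q : ℕ) :
    countedSequence (p + 1) (q + 1) ∩ {l | l.headI = 1}ᶜ =
      (countedSequence (p + 1) q).image (List.cons (-1)) := by
  rw [counted_succ_succ, union_inter_distrib_right,
      (_ : List.cons 1 '' countedSequence p (q + 1) ∩ {l : List ℤ | l.headI = 1}ᶜ = ∅),
      empty_union] <;>
    · ext
      simp only [mem_inter_iff, mem_image, mem_setOf_eq, and_iff_left_iff_imp, mem_empty_iff_false,
        iff_false, not_and, forall_exists_index, and_imp]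
      rintro y _ rfl
      norm_num

theorem ballot_neg (p q : ℕ) (qp : q < p) :
    uniformOn (countedSequence (p + 1) (q + 1) ∩ {l | l.headI = 1}ᶜ) staysPositive =
      uniformOn (countedSequence (p + 1) q) staysPositive := by
  rw [countedSequence_int_neg_counted_succ_succ, uniformOn, uniformOn,
    cond_apply list_int_measurableSet, cond_apply list_int_measurableSet,
    count_injective_image List.cons_injective]
  congr 1
  have : List.cons (-1) '' countedSequence (p + 1) q ∩ staysPositive =
      List.cons (-1) '' (countedSequence (p + 1) q ∩ staysPositive) := by
    simp only [image_inter List.cons_injective, Set.ext_iff, mem_inter_iff, and_congr_right_iff,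
      forall_mem_image, List.cons_injective.mem_set_image, staysPositive_cons, and_iff_left_iff_imp]
    intro l hl _
    simp [sum_of_mem_countedSequence hl, lt_sub_iff_add_lt', qp]
  rw [this, count_injective_image]
  exact List.cons_injective

theorem ballot_problem' :
    ∀ q p, q < p → (uniformOn (countedSequence p q) staysPositive).toReal = (p - q) / (p + q) := by
  classical
  apply Nat.diag_induction
  · intro p
    rw [ballot_same]
    simp
  · intro p
    rw [ballot_edge]
    simp only [ENNReal.toReal_one, Nat.cast_add, Nat.cast_one, Nat.cast_zero, sub_zero, add_zero]
    rw [div_self]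
    exact Nat.cast_add_one_ne_zero p
  · intro q p qp h₁ h₂
    haveI := uniformOn_isProbabilityMeasure
      (countedSequence_finite p (q + 1)) (countedSequence_nonempty _ _)
    haveI := uniformOn_isProbabilityMeasure
      (countedSequence_finite (p + 1) q) (countedSequence_nonempty _ _)
    have h₃ : p + 1 + (q + 1) > 0 := Nat.add_pos_left (Nat.succ_pos _) _
    rw [← uniformOn_add_compl_eq {l : List ℤ | l.headI = 1} _ (countedSequence_finite _ _),
      first_vote_pos _ _ h₃, first_vote_neg _ _ h₃, ballot_pos, ballot_neg _ _ qp]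
    rw [ENNReal.toReal_add, ENNReal.toReal_mul, ENNReal.toReal_mul, ← Nat.cast_add,
      ENNReal.toReal_div, ENNReal.toReal_div, ENNReal.toReal_natCast, ENNReal.toReal_natCast,
      ENNReal.toReal_natCast, h₁, h₂]
    · have h₄ : (p + 1 : ℝ) + (q + 1 : ℝ) ≠ (0 : ℝ) := by
        apply ne_of_gt
        assumption_mod_cast
      have h₅ : (p + 1 : ℝ) + ↑q ≠ (0 : ℝ) := by
        apply ne_of_gt
        norm_cast
        linarith
      have h₆ : ↑p + (q + 1 : ℝ) ≠ (0 : ℝ) := by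
        apply ne_of_gt
        norm_cast
        linarith
      push_cast
      field_simp [h₄, h₅, h₆]
      ring
    all_goals exact ENNReal.mul_ne_top (measure_ne_top _ _) (by simp [Ne, ENNReal.div_eq_top])

/-- The ballot problem. -/
theorem ballot_problem :
    ∀ q p, q < p → uniformOn (countedSequence p q) staysPositive = (p - q) / (p + q) := by
  intro q p qp
  haveI :=
    uniformOn_isProbabilityMeasure (countedSequence_finite p q) (countedSequence_nonempty _ _)
  have :
    (uniformOn (countedSequence p q) staysPositive).toReal =
      ((p - q) / (p + q) : ℝ≥0∞).toReal := by
    rw [ballot_problem' q p qp]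
    rw [ENNReal.toReal_div, ← Nat.cast_add, ← Nat.cast_add, ENNReal.toReal_natCast,
      ENNReal.toReal_sub_of_le, ENNReal.toReal_natCast, ENNReal.toReal_natCast]
    exacts [Nat.cast_le.2 qp.le, ENNReal.natCast_ne_top _]
  rwa [ENNReal.toReal_eq_toReal_iff' (measure_lt_top _ _).ne] at this
  simp only [Ne, ENNReal.div_eq_top, tsub_eq_zero_iff_le, Nat.cast_le, not_le,
    add_eq_zero, Nat.cast_eq_zero, ENNReal.add_eq_top, ENNReal.natCast_ne_top, or_self_iff,
    not_false_iff, and_true]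
  push_neg
  exact ⟨fun _ _ => by linarith, (tsub_le_self.trans_lt (ENNReal.natCast_ne_top p).lt_top).ne⟩

end Ballot


open Finset

namespace BallotAux

/-- step value of the walk indexed by a set of "+1 positions" -/
def bsgn (s : Finset ℕ) (i : ℕ) : ℤ := if i ∈ s then 1 else -1

/-- the corresponding list, reversed so that suffixes are prefixes of the walk -/
def wlist (n : ℕ) (s : Finset ℕ) : List ℤ := ((List.range n).map (bsgn s)).reverse

lemma bsgn_mem {s i} (h : i ∈ s) : bsgn s i = 1 := if_pos h
lemma bsgn_not_mem {s i} (h : i ∉ s) : bsgn s i = -1 := if_neg h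

lemma sum_range_map (k : ℕ) (f : ℕ → ℤ) : ((List.range k).map f).sum = ∑ i ∈ Finset.range k, f i := by
  induction k with
  | zero => simp
  | succ k ih => rw [List.range_succ, Finset.sum_range_succ, List.map_append, List.sum_append, ih]; simp

lemma wlist_length (n s) : (wlist n s).length = n := by simp [wlist]

lemma wlist_sum (n s) : (wlist n s).sum = ∑ i ∈ Finset.range n, bsgn s i := by
  simp [wlist, sum_range_map, List.sum_reverse]

lemma wlist_count_one (n s) : (wlist n s).count 1 = ((Finset.range n).filter (· ∈ s)).card := by
  induction n with
  | zero => simp [wlist]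
  | succ n ih =>
    rw [wlist, List.count_reverse] at ih ⊢
    rw [List.range_succ, Finset.range_add_one, List.map_append, List.count_append, ih,
      Finset.filter_insert]
    by_cases h : n ∈ s
    · rw [if_pos h, Finset.card_insert_of_notMem (by simp)]
      simp [bsgn_mem h]
    · rw [if_neg h]
      simp [List.count_singleton, bsgn_not_mem h]

lemma wlist_count_neg_one (n s) :
    (wlist n s).count (-1) = ((Finset.range n).filter (· ∉ s)).card := by
  induction n with
  | zero => simp [wlist]
  | succ n ih =>
    rw [wlist, List.count_reverse] at ih ⊢
    rw [List.range_succ, Finset.range_add_one, List.map_append, List.count_append, ih,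
      Finset.filter_insert]
    by_cases h : n ∈ s
    · rw [if_neg (by simp [h])]
      simp [List.count_singleton, bsgn_mem h]
    · rw [if_pos h, Finset.card_insert_of_notMem (by simp)]
      simp [bsgn_not_mem h]

lemma wlist_mem {n s} {x : ℤ} (hx : x ∈ wlist n s) : x = 1 ∨ x = -1 := by
  simp only [wlist, List.mem_reverse, List.mem_map] at hx
  obtain ⟨i, -, rfl⟩ := hx
  by_cases h : i ∈ s
  · exact Or.inl (bsgn_mem h)
  · exact Or.inr (bsgn_not_mem h)

/-- the key property correspondence -/
lemma wlist_staysPositive (n s) :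
    wlist n s ∈ Ballot.staysPositive ↔
      ∀ k ∈ Finset.Icc 1 n, 0 < ∑ i ∈ Finset.range k, bsgn s i := by
  constructor
  · intro H k hk
    rw [Finset.mem_Icc] at hk
    have hsuf : (((List.range n).map (bsgn s)).take k).reverse <:+ wlist n s := by
      rw [List.reverse_take, wlist]
      exact List.drop_suffix _ _
    have hne : (((List.range n).map (bsgn s)).take k).reverse ≠ [] := by
      simp only [ne_eq, List.reverse_eq_nil_iff, ← List.length_eq_zero_iff]
      rw [List.length_reverse, List.length_take]
      simp only [List.length_map, List.length_range]
      omega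
    have := H _ hne hsuf
    rwa [List.sum_reverse, ← List.map_take, List.take_range, min_eq_left hk.2,
      sum_range_map] at this
  · intro H l₂ hne hsuf
    rw [List.suffix_iff_eq_drop, wlist_length] at hsuf
    have hlen : l₂.length ≤ n := by
      have h2 := congrArg List.length hsuf
      rw [List.length_drop, wlist_length] at h2
      omega
    have hrepr : l₂ = (((List.range n).map (bsgn s)).take l₂.length).reverse := by
      rw [List.reverse_take, List.length_map, List.length_range]
      exact hsuf
    rw [hrepr, List.sum_reverse, ← List.map_take, List.take_range, min_eq_left hlen,
      sum_range_map]
    apply H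
    rw [Finset.mem_Icc]
    have : l₂.length ≠ 0 := fun h => hne (List.length_eq_zero_iff.mp h)
    omega

end BallotAux

namespace BallotAux
open Finset MeasureTheory ProbabilityTheory
open scoped ENNReal

def Pos (n : ℕ) (s : Finset ℕ) : Prop := ∀ k ∈ Finset.Icc 1 n, 0 < ∑ i ∈ Finset.range k, bsgn s i
def Neg (n : ℕ) (s : Finset ℕ) : Prop := ∀ k ∈ Finset.Icc 1 n, ∑ i ∈ Finset.range k, bsgn s i < 0

instance (n : ℕ) : DecidablePred (Pos n) := fun s => by unfold Pos; infer_instance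
instance (n : ℕ) : DecidablePred (Neg n) := fun s => by unfold Neg; infer_instance

lemma filter_mem_range {n : ℕ} {s : Finset ℕ} (hs : s ⊆ Finset.range n) :
    (Finset.range n).filter (· ∈ s) = s := by
  rw [Finset.filter_mem_eq_inter, Finset.inter_eq_right.2 hs]

lemma sum_bsgn {n : ℕ} {s : Finset ℕ} (hs : s ⊆ Finset.range n) :
    ∑ i ∈ Finset.range n, bsgn s i = 2 * (s.card : ℤ) - n := by
  have hcard : ((Finset.range n).filter (· ∈ s)).card + ((Finset.range n).filter (¬ · ∈ s)).card
      = n := by rw [Finset.card_filter_add_card_filter_not, Finset.card_range]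
  rw [filter_mem_range hs] at hcard
  have hle : s.card ≤ n := by omega
  unfold bsgn
  rw [Finset.sum_ite, Finset.sum_const, Finset.sum_const, filter_mem_range hs]
  have : ((Finset.range n).filter (¬ · ∈ s)).card = n - s.card := by omega
  rw [this]
  simp only [nsmul_eq_mul, mul_one, mul_neg_one, smul_eq_mul, mul_neg]
  omega

lemma wlist_mem_counted {n p : ℕ} {s : Finset ℕ} (hs : s ⊆ Finset.range n) (hc : s.card = p) :
    wlist n s ∈ Ballot.countedSequence p (n - p) := by
  refine ⟨?_, ?_, fun x hx => wlist_mem hx⟩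
  · rw [wlist_count_one, filter_mem_range hs, hc]
  · rw [wlist_count_neg_one]
    have hcard : ((Finset.range n).filter (· ∈ s)).card + ((Finset.range n).filter (¬ · ∈ s)).card
        = n := by rw [Finset.card_filter_add_card_filter_not, Finset.card_range]
    rw [filter_mem_range hs, hc] at hcard
    simpa using by omega

lemma wlist_inj {n : ℕ} {s t : Finset ℕ} (hs : s ⊆ Finset.range n) (ht : t ⊆ Finset.range n)
    (h : wlist n s = wlist n t) : s = t := by
  unfold wlist at h
  have h2 := List.reverse_injective h
  rw [List.map_inj_left] at h2
  ext a
  constructor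
  · intro ha
    have h3 := h2 a (by simpa using Finset.mem_range.1 (hs ha))
    rw [bsgn_mem ha] at h3
    by_contra hat
    rw [bsgn_not_mem hat] at h3
    norm_num at h3
  · intro ha
    have h3 := h2 a (by simpa using Finset.mem_range.1 (ht ha))
    rw [bsgn_mem ha] at h3
    by_contra hat
    rw [bsgn_not_mem hat] at h3
    norm_num at h3

lemma wlist_surj {n p q : ℕ} (hpq : p + q = n) {l : List ℤ}
    (hl : l ∈ Ballot.countedSequence p q) :
    ∃ s, s ⊆ Finset.range n ∧ s.card = p ∧ wlist n s = l := by
  classical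
  have hlen : l.length = n := by rw [Ballot.length_of_mem_countedSequence hl, hpq]
  have hlenr : l.reverse.length = n := by rw [List.length_reverse, hlen]
  refine ⟨(Finset.range n).filter (fun i => l.reverse.getD i 0 = 1), Finset.filter_subset _ _,
    ?_, ?_⟩
  all_goals {
    have hw : wlist n ((Finset.range n).filter (fun i => l.reverse.getD i 0 = 1)) = l := by
      set s := (Finset.range n).filter (fun i => l.reverse.getD i 0 = 1) with hsdef
      have hmap : (List.range n).map (bsgn s) = l.reverse := by
        apply List.ext_getElem (by simp [hlenr])
        intro i h1 h2
        have hin : i < n := by simpa using h1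
        have hgetD : l.reverse.getD i 0 = l.reverse[i] := List.getD_eq_getElem _ _ (by omega)
        have hmem : l.reverse[i] ∈ l := List.mem_reverse.1 (l.reverse.getElem_mem _)
        simp only [List.getElem_map, List.getElem_range]
        rcases Ballot.mem_of_mem_countedSequence hl hmem with h1 | h1
        · rw [h1, bsgn_mem]
          rw [hsdef, Finset.mem_filter]
          exact ⟨Finset.mem_range.2 hin, by rw [hgetD, h1]⟩
        · rw [h1, bsgn_not_mem]
          rw [hsdef, Finset.mem_filter]
          rintro ⟨-, hc⟩
          rw [hgetD, h1] at hc
          norm_num at hc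
      rw [wlist, hmap, List.reverse_reverse]
    first
      | exact hw
      | { have h1 := wlist_count_one n ((Finset.range n).filter (fun i => l.reverse.getD i 0 = 1))
          rw [hw, hl.1, filter_mem_range (Finset.filter_subset _ _)] at h1
          exact h1.symm } }

private def mListInt : MeasurableSpace (List ℤ) := ⊤
attribute [local instance] mListInt
private theorem mSingListInt : MeasurableSingletonClass (List ℤ) :=
  ⟨fun _ => trivial⟩
attribute [local instance] mSingListInt

/-- counting version of the ballot problem -/
lemma ballot_count (p q : ℕ) (h : q < p) :
    (p + q) * (Ballot.countedSequence p q ∩ Ballot.staysPositive).ncard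
      = (p - q) * (p + q).choose p := by
  have hfin : (Ballot.countedSequence p q ∩ Ballot.staysPositive).Finite :=
    (Ballot.countedSequence_finite p q).inter_of_left _
  have hb := Ballot.ballot_problem q p h
  rw [uniformOn, ProbabilityTheory.cond_apply (by trivial)] at hb
  rw [Ballot.count_countedSequence] at hb
  have hC0 : ((p + q).choose p : ℝ≥0∞) ≠ 0 := by
    exact_mod_cast (Nat.choose_pos (by omega : p ≤ p + q)).ne'
  have hCt : ((p + q).choose p : ℝ≥0∞) ≠ ⊤ := ENNReal.natCast_ne_top _
  have hX : Measure.count (Ballot.countedSequence p q ∩ Ballot.staysPositive)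
      = ((p + q).choose p : ℝ≥0∞) * ((↑p - ↑q) / (↑p + ↑q)) := by
    rw [← hb, ← mul_assoc, ENNReal.mul_inv_cancel hC0 hCt, one_mul]
    rfl
  have hcnt : Measure.count (Ballot.countedSequence p q ∩ Ballot.staysPositive)
      = ((Ballot.countedSequence p q ∩ Ballot.staysPositive).ncard : ℝ≥0∞) := by
    rw [Measure.count_apply_finite _ hfin, Set.ncard_eq_toFinset_card _ hfin]
  have hpq0 : ((p : ℝ≥0∞) + q) ≠ 0 := by
    have : p ≠ 0 := by omega
    simp [this]
  have hpqt : ((p : ℝ≥0∞) + q) ≠ ⊤ := by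
    simp [ENNReal.add_ne_top]
  have key : ((p:ℝ≥0∞) + q) * ((Ballot.countedSequence p q ∩ Ballot.staysPositive).ncard : ℝ≥0∞)
      = ((p + q).choose p : ℝ≥0∞) * (↑p - ↑q) := by
    rw [← hcnt, hX]
    rw [mul_comm ((p:ℝ≥0∞)+q), mul_assoc, ENNReal.div_mul_cancel hpq0 hpqt]
  have hsub : ((p:ℝ≥0∞) - q) = ((p - q : ℕ) : ℝ≥0∞) := (ENNReal.natCast_sub p q).symm
  rw [hsub] at key
  have : (((p + q) * (Ballot.countedSequence p q ∩ Ballot.staysPositive).ncard : ℕ) : ℝ≥0∞)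
      = (((p + q).choose p * (p - q) : ℕ) : ℝ≥0∞) := by push_cast; exact_mod_cast key
  have h2 := (Nat.cast_injective : Function.Injective ((↑·) : ℕ → ℝ≥0∞)) this
  rw [h2, Nat.mul_comm]

end BallotAux

namespace BallotAux
open Finset

lemma card_pos_of_gt (n p : ℕ) (hpn : p ≤ n) (h : n < 2 * p) :
    n * ((Finset.powersetCard p (Finset.range n)).filter (Pos n)).card
      = (2 * p - n) * n.choose p := by
  have hb := ballot_count p (n - p) (by omega)
  rw [show p + (n - p) = n by omega, show p - (n - p) = 2 * p - n by omega] at hb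
  have hcard : ((Finset.powersetCard p (Finset.range n)).filter (Pos n)).card
      = (Ballot.countedSequence p (n - p) ∩ Ballot.staysPositive).ncard := by
    have hfin : (Ballot.countedSequence p (n - p) ∩ Ballot.staysPositive).Finite :=
      (Ballot.countedSequence_finite _ _).inter_of_left _
    rw [Set.ncard_eq_toFinset_card _ hfin]
    refine Finset.card_bij (fun s _ => wlist n s) ?_ ?_ ?_
    · intro s hs
      rw [Finset.mem_filter, Finset.mem_powersetCard] at hs
      rw [Set.Finite.mem_toFinset]
      exact ⟨wlist_mem_counted hs.1.1 hs.1.2, (wlist_staysPositive n s).2 hs.2⟩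
    · intro s hs t ht hst
      rw [Finset.mem_filter, Finset.mem_powersetCard] at hs ht
      exact wlist_inj hs.1.1 ht.1.1 hst
    · intro l hl
      rw [Set.Finite.mem_toFinset] at hl
      obtain ⟨s, hsub, hcard, hw⟩ := wlist_surj (show p + (n - p) = n by omega) hl.1
      refine ⟨s, ?_, hw⟩
      rw [Finset.mem_filter, Finset.mem_powersetCard]
      exact ⟨⟨hsub, hcard⟩, (wlist_staysPositive n s).1 (hw ▸ hl.2)⟩
  rw [hcard, hb]

lemma card_pos_of_le (n p : ℕ) (hn : 1 ≤ n) (h : 2 * p ≤ n) :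
    ((Finset.powersetCard p (Finset.range n)).filter (Pos n)).card = 0 := by
  rw [Finset.card_eq_zero, Finset.filter_eq_empty_iff]
  intro s hs
  rw [Finset.mem_powersetCard] at hs
  intro hpos
  have h1 := hpos n (Finset.mem_Icc.2 ⟨hn, le_rfl⟩)
  rw [sum_bsgn hs.1, hs.2] at h1
  omega

lemma bsgn_sdiff {n k : ℕ} (s : Finset ℕ) (hk : k ≤ n) :
    ∑ i ∈ Finset.range k, bsgn (Finset.range n \ s) i
      = - ∑ i ∈ Finset.range k, bsgn s i := by
  rw [← Finset.sum_neg_distrib]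
  refine Finset.sum_congr rfl fun i hi => ?_
  have hin : i ∈ Finset.range n := by
    rw [Finset.mem_range] at hi ⊢; omega
  by_cases h : i ∈ s
  · rw [bsgn_mem h, bsgn_not_mem (by simp [Finset.mem_sdiff, h])]
  · rw [bsgn_not_mem h, bsgn_mem (Finset.mem_sdiff.2 ⟨hin, h⟩)]
    norm_num

lemma neg_iff_pos_sdiff {n : ℕ} (s : Finset ℕ) :
    Neg n s ↔ Pos n (Finset.range n \ s) := by
  constructor
  · intro h k hk
    rw [bsgn_sdiff s (Finset.mem_Icc.1 hk).2]
    have := h k hk; omega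
  · intro h k hk
    have := h k hk
    rw [bsgn_sdiff s (Finset.mem_Icc.1 hk).2] at this; omega

lemma card_neg_eq_card_pos (n : ℕ) :
    ((Finset.range n).powerset.filter (Neg n)).card
      = ((Finset.range n).powerset.filter (Pos n)).card := by
  refine Finset.card_bij' (fun s _ => Finset.range n \ s) (fun s _ => Finset.range n \ s)
    ?_ ?_ ?_ ?_
  · intro s hs
    rw [Finset.mem_filter, Finset.mem_powerset] at hs ⊢
    exact ⟨Finset.sdiff_subset, (neg_iff_pos_sdiff s).1 hs.2⟩
  · intro s hs
    rw [Finset.mem_filter, Finset.mem_powerset] at hs ⊢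
    refine ⟨Finset.sdiff_subset, (neg_iff_pos_sdiff _).2 ?_⟩
    rw [Finset.sdiff_sdiff_eq_self hs.1]
    exact hs.2
  · intro s hs
    rw [Finset.mem_filter, Finset.mem_powerset] at hs
    exact Finset.sdiff_sdiff_eq_self hs.1
  · intro s hs
    rw [Finset.mem_filter, Finset.mem_powerset] at hs
    exact Finset.sdiff_sdiff_eq_self hs.1

lemma card_pos_fiberwise (n : ℕ) :
    ((Finset.range n).powerset.filter (Pos n)).card
      = ∑ p ∈ Finset.range (n + 1),
          ((Finset.powersetCard p (Finset.range n)).filter (Pos n)).card := by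
  rw [Finset.card_eq_sum_ones,
    ← Finset.sum_fiberwise_of_maps_to (g := Finset.card) (t := Finset.range (n + 1))
      (fun s hs => by
        rw [Finset.mem_filter, Finset.mem_powerset] at hs
        rw [Finset.mem_range]
        have := Finset.card_le_card hs.1
        rw [Finset.card_range] at this; omega)]
  refine Finset.sum_congr rfl fun p _ => ?_
  rw [← Finset.card_eq_sum_ones, Finset.filter_comm, ← Finset.powersetCard_eq_filter]

lemma sum_abs_fiberwise (n : ℕ) :
    ∑ s ∈ (Finset.range n).powerset, |∑ i ∈ Finset.range n, bsgn s i|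
      = ∑ p ∈ Finset.range (n + 1), (n.choose p : ℤ) * |2 * (p : ℤ) - n| := by
  rw [← Finset.sum_fiberwise_of_maps_to (g := Finset.card) (t := Finset.range (n + 1))
      (fun s hs => by
        rw [Finset.mem_powerset] at hs
        rw [Finset.mem_range]
        have := Finset.card_le_card hs
        rw [Finset.card_range] at this; omega)]
  refine Finset.sum_congr rfl fun p _ => ?_
  have : ∀ s ∈ (Finset.range n).powerset.filter (fun s => s.card = p),
      |∑ i ∈ Finset.range n, bsgn s i| = |2 * (p : ℤ) - n| := by
    intro s hs
    rw [Finset.mem_filter, Finset.mem_powerset] at hs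
    rw [sum_bsgn hs.1, hs.2]
  rw [Finset.sum_congr rfl this, Finset.sum_const, ← Finset.powersetCard_eq_filter,
    Finset.card_powersetCard, Finset.card_range, nsmul_eq_mul]

theorem comb_main (n : ℕ) (hn : 1 ≤ n) :
    (n : ℤ) * ((((Finset.range n).powerset.filter (Pos n)).card : ℤ)
      + (((Finset.range n).powerset.filter (Neg n)).card : ℤ))
    = ∑ s ∈ (Finset.range n).powerset, |∑ i ∈ Finset.range n, bsgn s i| := by
  have hA : (n : ℤ) * (((Finset.range n).powerset.filter (Pos n)).card : ℤ)
      = ∑ p ∈ Finset.range (n + 1),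
          (if n < 2 * p then (n.choose p : ℤ) * (2 * (p : ℤ) - n) else 0) := by
    rw [card_pos_fiberwise n]
    push_cast
    rw [Finset.mul_sum]
    refine Finset.sum_congr rfl fun p hp => ?_
    have hpn : p ≤ n := by rw [Finset.mem_range] at hp; omega
    by_cases h : n < 2 * p
    · rw [if_pos h]
      have := card_pos_of_gt n p hpn h
      have hcast : ((n * ((Finset.powersetCard p (Finset.range n)).filter (Pos n)).card : ℕ) : ℤ)
          = (((2 * p - n) * n.choose p : ℕ) : ℤ) := congrArg (Nat.cast : ℕ → ℤ) this
      push_cast [Nat.cast_sub (by omega : n ≤ 2 * p)] at hcast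
      rw [hcast]; ring
    · rw [if_neg h, card_pos_of_le n p hn (by omega)]
      simp
  have hrefl := Finset.sum_range_reflect
    (fun p => if 2 * p < n then (n.choose p : ℤ) * ((n : ℤ) - 2 * (p : ℤ)) else 0) (n + 1)
  have hB : ∑ p ∈ Finset.range (n + 1),
        (if 2 * p < n then (n.choose p : ℤ) * ((n : ℤ) - 2 * (p : ℤ)) else 0)
      = ∑ p ∈ Finset.range (n + 1),
          (if n < 2 * p then (n.choose p : ℤ) * (2 * (p : ℤ) - n) else 0) := by
    rw [← hrefl]
    refine Finset.sum_congr rfl fun p hp => ?_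
    have hpn : p ≤ n := by rw [Finset.mem_range] at hp; omega
    have hidx : n + 1 - 1 - p = n - p := by omega
    rw [hidx]
    by_cases h : n < 2 * p
    · rw [if_pos (by omega : 2 * (n - p) < n), if_pos h, Nat.choose_symm hpn]
      push_cast [Nat.cast_sub hpn]
      ring
    · rw [if_neg (by omega : ¬ 2 * (n - p) < n), if_neg h]
  have hRHS : ∑ s ∈ (Finset.range n).powerset, |∑ i ∈ Finset.range n, bsgn s i|
      = (∑ p ∈ Finset.range (n + 1),
          (if n < 2 * p then (n.choose p : ℤ) * (2 * (p : ℤ) - n) else 0))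
        + ∑ p ∈ Finset.range (n + 1),
          (if 2 * p < n then (n.choose p : ℤ) * ((n : ℤ) - 2 * (p : ℤ)) else 0) := by
    rw [sum_abs_fiberwise n, ← Finset.sum_add_distrib]
    refine Finset.sum_congr rfl fun p _ => ?_
    rcases lt_trichotomy (2 * p) n with h | h | h
    · rw [if_neg (by omega), if_pos h, zero_add, abs_of_neg (by omega : 2 * (p:ℤ) - n < 0)]
      ring
    · rw [if_neg (by omega), if_neg (by omega), add_zero]
      have : 2 * (p : ℤ) - n = 0 := by omega
      rw [this]
      simp
    · rw [if_pos h, if_neg (by omega), add_zero, abs_of_pos (by omega : (0:ℤ) < 2 * (p:ℤ) - n)]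
  rw [hRHS, hB, card_neg_eq_card_pos n, mul_add, hA]

end BallotAux

namespace BallotAux
open Finset MeasureTheory ProbabilityTheory
open scoped ENNReal

/-- real-valued step -/
def rsgn (s : Finset ℕ) (i : ℕ) : ℝ := if i ∈ s then 1 else -1

lemma rsgn_eq_cast (s : Finset ℕ) (i : ℕ) : rsgn s i = ((bsgn s i : ℤ) : ℝ) := by
  unfold rsgn bsgn; split <;> simp

section Prob

variable {Ω : Type*} [MeasurableSpace Ω] (P : Measure Ω) [IsProbabilityMeasure P]
  (δ : ℕ → Ω → ℝ) (n : ℕ)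

/-- the atom event for a sign pattern `s` -/
def atomE (s : Finset ℕ) : Set Ω := ⋂ i ∈ Finset.range n, δ i ⁻¹' {rsgn s i}

lemma mem_atomE {s : Finset ℕ} {ω : Ω} :
    ω ∈ atomE δ n s ↔ ∀ i ∈ Finset.range n, δ i ω = rsgn s i := by
  simp [atomE]

variable (hmeas : ∀ i, Measurable (δ i))

include hmeas in
lemma measurable_atomE (s : Finset ℕ) : MeasurableSet (atomE δ n s) :=
  MeasurableSet.biInter (Set.to_countable _)
    (fun i _ => (hmeas i) (measurableSet_singleton _))

variable (hdist : ∀ i, P {ω | δ i ω = 1} = 1/2 ∧ P {ω | δ i ω = -1} = 1/2)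

include hdist in
lemma prob_sgn (i : ℕ) (x : ℝ) (hx : x = 1 ∨ x = -1) : P (δ i ⁻¹' {x}) = 2⁻¹ := by
  have h1 : δ i ⁻¹' {x} = {ω | δ i ω = x} := by ext ω; simp
  rcases hx with rfl | rfl
  · rw [h1, (hdist i).1, one_div]
  · rw [h1, (hdist i).2, one_div]

include hdist in
lemma prob_atomE (hindep : iIndepFun δ P) (s : Finset ℕ) :
    P (atomE δ n s) = 2⁻¹ ^ n := by
  rw [iIndepFun_iff_measure_inter_preimage_eq_mul] at hindep
  have := hindep (Finset.range n) (sets := fun i => {rsgn s i})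
    (fun i _ => measurableSet_singleton _)
  rw [atomE, this]
  have : ∀ i ∈ Finset.range n, P (δ i ⁻¹' {rsgn s i}) = 2⁻¹ := by
    intro i _
    refine prob_sgn P δ hdist i _ ?_
    unfold rsgn; split
    · exact Or.inl rfl
    · exact Or.inr rfl
  rw [Finset.prod_congr rfl this, Finset.prod_const, Finset.card_range]

lemma disjoint_atomE {s t : Finset ℕ} (hs : s ⊆ Finset.range n) (ht : t ⊆ Finset.range n)
    (hst : s ≠ t) : Disjoint (atomE δ n s) (atomE δ n t) := by
  rw [Set.disjoint_left]
  intro ω hωs hωt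
  rw [mem_atomE] at hωs hωt
  have hex : ∃ a, (a ∈ s ∧ a ∉ t) ∨ (a ∈ t ∧ a ∉ s) := by
    by_contra hc
    push_neg at hc
    refine hst (Finset.ext fun a => ?_)
    have := hc a
    tauto
  obtain ⟨a, ⟨h1, h2⟩ | ⟨h1, h2⟩⟩ := hex
  · have e1 := hωs a (hs h1)
    have e2 := hωt a (hs h1)
    rw [rsgn, if_pos h1] at e1
    rw [rsgn, if_neg h2] at e2
    rw [e1] at e2
    norm_num at e2
  · have e1 := hωs a (ht h1)
    have e2 := hωt a (ht h1)
    rw [rsgn, if_neg h2] at e1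
    rw [rsgn, if_pos h1] at e2
    rw [e1] at e2
    norm_num at e2

/-- the union of all atoms -/
def atomU : Set Ω := ⋃ s ∈ (Finset.range n).powerset, atomE δ n s

include hmeas hdist in
lemma prob_atomU_compl : P (atomU δ n)ᶜ = 0 := by
  classical
  have hms : ∀ i (x : ℝ), MeasurableSet {ω : Ω | δ i ω = x} := fun i x =>
    (hmeas i) (measurableSet_singleton x)
  have hAi : ∀ i, P ({ω | δ i ω = 1} ∪ {ω | δ i ω = -1})ᶜ = 0 := by
    intro i
    rw [prob_compl_eq_zero_iff ((hms i 1).union (hms i (-1)))]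
    rw [measure_union _ (hms i (-1)), (hdist i).1, (hdist i).2, ENNReal.div_add_div_same]
    · rw [one_add_one_eq_two]
      exact ENNReal.div_self (by norm_num) (by norm_num)
    · rw [Set.disjoint_left]
      intro ω h1 h2
      rw [Set.mem_setOf_eq] at h1 h2
      rw [h1] at h2
      norm_num at h2
  have hsub : (atomU δ n)ᶜ ⊆ ⋃ i ∈ Finset.range n, ({ω | δ i ω = 1} ∪ {ω | δ i ω = -1})ᶜ := by
    intro ω hω
    by_contra hc
    rw [Set.mem_iUnion₂] at hc
    push_neg at hc
    have hval : ∀ i ∈ Finset.range n, δ i ω = 1 ∨ δ i ω = -1 := by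
      intro i hi
      have := hc i hi
      rw [Set.notMem_compl_iff] at this
      exact this
    refine hω (Set.mem_iUnion₂.2 ⟨(Finset.range n).filter (fun i => δ i ω = 1),
      Finset.mem_powerset.2 (Finset.filter_subset _ _), ?_⟩)
    rw [mem_atomE]
    intro i hi
    rcases hval i hi with h | h
    · rw [rsgn, if_pos (Finset.mem_filter.2 ⟨hi, h⟩), h]
    · rw [rsgn, if_neg, h]
      intro hmem
      rw [(Finset.mem_filter.1 hmem).2] at h
      norm_num at h
  refine le_antisymm (le_trans (measure_mono hsub) ?_) (by positivity)
  refine le_trans (measure_biUnion_finset_le _ _) ?_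
  rw [Finset.sum_eq_zero (fun i _ => hAi i)]

variable (hindep : iIndepFun δ P)

include hmeas hdist hindep in
lemma prob_eq (A : Set Ω) (hA : MeasurableSet A) (Q : Finset ℕ → Prop) [DecidablePred Q]
    (hfib : ∀ s ∈ (Finset.range n).powerset, ∀ ω ∈ atomE δ n s, (ω ∈ A ↔ Q s)) :
    P A = (((Finset.range n).powerset.filter Q).card : ℝ≥0∞) * 2⁻¹ ^ n := by
  have hPU : P A = P (A ∩ atomU δ n) := by
    refine le_antisymm ?_ (measure_mono Set.inter_subset_left)
    calc P A ≤ P ((A ∩ atomU δ n) ∪ (atomU δ n)ᶜ) := by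
          refine measure_mono fun ω hω => ?_
          by_cases h : ω ∈ atomU δ n
          · exact Or.inl ⟨hω, h⟩
          · exact Or.inr h
      _ ≤ P (A ∩ atomU δ n) + P (atomU δ n)ᶜ := measure_union_le _ _
      _ = P (A ∩ atomU δ n) := by rw [prob_atomU_compl P δ n hmeas hdist, add_zero]
  have hAU : A ∩ atomU δ n = ⋃ s ∈ (Finset.range n).powerset.filter Q, atomE δ n s := by
    ext ω
    simp only [Set.mem_inter_iff, atomU, Set.mem_iUnion₂, Finset.mem_filter]
    constructor
    · rintro ⟨hωA, s, hs, hωs⟩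
      exact ⟨s, ⟨hs, (hfib s hs ω hωs).1 hωA⟩, hωs⟩
    · rintro ⟨s, ⟨hs, hQ⟩, hωs⟩
      exact ⟨(hfib s hs ω hωs).2 hQ, s, hs, hωs⟩
  rw [hPU, hAU, measure_biUnion_finset ?_ (fun s _ => measurable_atomE δ n hmeas s)]
  · rw [Finset.sum_congr rfl (fun s _ => prob_atomE P δ n hdist hindep s),
      Finset.sum_const, nsmul_eq_mul]
  · intro s hs t ht hst
    simp only [Finset.coe_filter, Set.mem_setOf_eq, Finset.mem_powerset] at hs ht
    exact disjoint_atomE δ n hs.1 ht.1 hst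

include hmeas hdist hindep in
lemma integral_abs_eq :
    ∫ ω, |∑ i ∈ Finset.range n, δ i ω| ∂P
      = ∑ s ∈ (Finset.range n).powerset,
          |∑ i ∈ Finset.range n, rsgn s i| * (2⁻¹ : ℝ) ^ n := by
  classical
  set g : Ω → ℝ := fun ω => ∑ s ∈ (Finset.range n).powerset,
    Set.indicator (atomE δ n s) (fun _ => |∑ i ∈ Finset.range n, rsgn s i|) ω with hg
  have hae : ∀ᵐ ω ∂P, ω ∈ atomU δ n := by
    rw [MeasureTheory.ae_iff]
    have : {ω : Ω | ¬ ω ∈ atomU δ n} = (atomU δ n)ᶜ := rfl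
    rw [this, prob_atomU_compl P δ n hmeas hdist]
  have hcongr : (fun ω => |∑ i ∈ Finset.range n, δ i ω|) =ᵐ[P] g := by
    filter_upwards [hae] with ω hω
    obtain ⟨s₀, hs₀, hωs₀⟩ := Set.mem_iUnion₂.1 hω
    have hval : |∑ i ∈ Finset.range n, δ i ω| = |∑ i ∈ Finset.range n, rsgn s₀ i| := by
      congr 1
      exact Finset.sum_congr rfl (fun i hi => (mem_atomE δ n).1 hωs₀ i hi)
    rw [hval]
    show _ = ∑ s ∈ (Finset.range n).powerset,
      Set.indicator (atomE δ n s) (fun _ => |∑ i ∈ Finset.range n, rsgn s i|) ω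
    rw [Finset.sum_eq_single_of_mem s₀ hs₀]
    · rw [Set.indicator_of_mem hωs₀]
    · intro t ht hts
      refine Set.indicator_of_notMem ?_ _
      intro hωt
      exact (Set.disjoint_left.1 (disjoint_atomE δ n (Finset.mem_powerset.1 ht)
        (Finset.mem_powerset.1 hs₀) hts)) hωt hωs₀
  rw [integral_congr_ae hcongr, hg]
  rw [integral_finset_sum _ (fun s _ =>
    (integrable_const _).indicator (measurable_atomE δ n hmeas s))]
  refine Finset.sum_congr rfl fun s hs => ?_
  rw [integral_indicator_const _ (measurable_atomE δ n hmeas s),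
    measureReal_def, prob_atomE P δ n hdist hindep s, smul_eq_mul, mul_comm]
  congr 1
  rw [ENNReal.toReal_pow, ENNReal.toReal_inv]
  norm_num

end Prob
end BallotAux

/-- Ballot-type identity for the simple symmetric random walk: the probability of
staying strictly positive plus the probability of staying strictly negative up to
time `n` equals `E|S_n|/n`. -/
theorem ballot_identity {Ω : Type*} [MeasurableSpace Ω] (P : Measure Ω)
    [IsProbabilityMeasure P] (δ : ℕ → Ω → ℝ) (n : ℕ) (hn : 1 ≤ n)
    (hmeas : ∀ i, Measurable (δ i))
    (hindep : iIndepFun δ P)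
    (hdist : ∀ i, P {ω | δ i ω = 1} = 1/2 ∧ P {ω | δ i ω = -1} = 1/2) :
    (P {ω | ∀ k ∈ Finset.Icc 1 n, 0 < ∑ i ∈ Finset.range k, δ i ω}).toReal
      + (P {ω | ∀ k ∈ Finset.Icc 1 n, ∑ i ∈ Finset.range k, δ i ω < 0}).toReal
      = (∫ ω, |∑ i ∈ Finset.range n, δ i ω| ∂P) / n := by
  open BallotAux in
  have hSmeas : ∀ k, Measurable (fun ω => ∑ i ∈ Finset.range k, δ i ω) := fun k =>
    Finset.measurable_sum _ (fun i _ => hmeas i)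
  have hApos : MeasurableSet {ω : Ω | ∀ k ∈ Finset.Icc 1 n,
      0 < ∑ i ∈ Finset.range k, δ i ω} := by
    have : {ω : Ω | ∀ k ∈ Finset.Icc 1 n, 0 < ∑ i ∈ Finset.range k, δ i ω}
        = ⋂ k ∈ Finset.Icc 1 n, {ω : Ω | 0 < ∑ i ∈ Finset.range k, δ i ω} := by
      ext ω; simp
    rw [this]
    exact MeasurableSet.biInter (Set.to_countable _)
      (fun k _ => measurableSet_lt measurable_const (hSmeas k))
  have hAneg : MeasurableSet {ω : Ω | ∀ k ∈ Finset.Icc 1 n,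
      ∑ i ∈ Finset.range k, δ i ω < 0} := by
    have : {ω : Ω | ∀ k ∈ Finset.Icc 1 n, ∑ i ∈ Finset.range k, δ i ω < 0}
        = ⋂ k ∈ Finset.Icc 1 n, {ω : Ω | ∑ i ∈ Finset.range k, δ i ω < 0} := by
      ext ω; simp
    rw [this]
    exact MeasurableSet.biInter (Set.to_countable _)
      (fun k _ => measurableSet_lt (hSmeas k) measurable_const)
  have hsum_eq : ∀ s ∈ (Finset.range n).powerset, ∀ ω ∈ BallotAux.atomE δ n s,
      ∀ k ≤ n, ∑ i ∈ Finset.range k, δ i ω = ∑ i ∈ Finset.range k, BallotAux.rsgn s i := by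
    intro s _ ω hω k hk
    refine Finset.sum_congr rfl fun i hi => ?_
    refine (BallotAux.mem_atomE δ n).1 hω i ?_
    rw [Finset.mem_range] at hi ⊢
    omega
  have hcast_sum : ∀ (s : Finset ℕ) (k : ℕ),
      ∑ i ∈ Finset.range k, BallotAux.rsgn s i
        = ((∑ i ∈ Finset.range k, BallotAux.bsgn s i : ℤ) : ℝ) := by
    intro s k
    rw [Int.cast_sum]
    exact Finset.sum_congr rfl fun i _ => BallotAux.rsgn_eq_cast s i
  have hfib_pos : ∀ s ∈ (Finset.range n).powerset, ∀ ω ∈ BallotAux.atomE δ n s,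
      (ω ∈ {ω : Ω | ∀ k ∈ Finset.Icc 1 n, 0 < ∑ i ∈ Finset.range k, δ i ω}
        ↔ BallotAux.Pos n s) := by
    intro s hs ω hω
    simp only [Set.mem_setOf_eq, BallotAux.Pos]
    refine forall₂_congr fun k hk => ?_
    rw [Finset.mem_Icc] at hk
    rw [hsum_eq s hs ω hω k hk.2, hcast_sum s k]
    exact_mod_cast Iff.rfl
  have hfib_neg : ∀ s ∈ (Finset.range n).powerset, ∀ ω ∈ BallotAux.atomE δ n s,
      (ω ∈ {ω : Ω | ∀ k ∈ Finset.Icc 1 n, ∑ i ∈ Finset.range k, δ i ω < 0}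
        ↔ BallotAux.Neg n s) := by
    intro s hs ω hω
    simp only [Set.mem_setOf_eq, BallotAux.Neg]
    refine forall₂_congr fun k hk => ?_
    rw [Finset.mem_Icc] at hk
    rw [hsum_eq s hs ω hω k hk.2, hcast_sum s k]
    exact_mod_cast Iff.rfl
  rw [BallotAux.prob_eq P δ n hmeas hdist hindep _ hApos (BallotAux.Pos n) hfib_pos,
    BallotAux.prob_eq P δ n hmeas hdist hindep _ hAneg (BallotAux.Neg n) hfib_neg,
    BallotAux.integral_abs_eq P δ n hmeas hdist hindep]
  -- now pure arithmetic
  have hcomb := BallotAux.comb_main n hn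
  have hcombR : (n : ℝ) * (((((Finset.range n).powerset.filter (BallotAux.Pos n)).card : ℝ))
      + ((((Finset.range n).powerset.filter (BallotAux.Neg n)).card : ℝ)))
      = ∑ s ∈ (Finset.range n).powerset, |∑ i ∈ Finset.range n, BallotAux.rsgn s i| := by
    have := congrArg (fun z : ℤ => (z : ℝ)) hcomb
    push_cast at this
    rw [this]
    refine Finset.sum_congr rfl fun s _ => ?_
    congr 1
    exact Finset.sum_congr rfl fun i _ => (BallotAux.rsgn_eq_cast s i).symm
  rw [ENNReal.toReal_mul, ENNReal.toReal_mul, ENNReal.toReal_pow,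
    ENNReal.toReal_natCast, ENNReal.toReal_natCast, ENNReal.toReal_inv, ENNReal.toReal_ofNat,
    ← Finset.sum_mul]
  set c : ℝ := ((2 : ℝ)⁻¹) ^ n with hc
  set a : ℝ := (((Finset.range n).powerset.filter (BallotAux.Pos n)).card : ℝ)
  set b : ℝ := (((Finset.range n).powerset.filter (BallotAux.Neg n)).card : ℝ)
  rw [← hcombR]
  have hn0 : (n : ℝ) ≠ 0 := by positivity
  field_simp
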